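/- Under the stated setup, let H : [0,T] → ℝ^{N×N} be a continuously differentiable symmetric-matrix-valued function with H(0) = 0 satisfying, for all τ ∈ [0,T], H'(τ) + H(τ) CᵀΣC H(τ) − (1/γ)( η(T−τ)ᵀC H(τ) + H(τ)Cᵀη(T−τ) ) − ((γ−1)/γ²) η(T−τ)ᵀΣ^{−1}η(T−τ) = 0. Let g : [0,T] → ℝ^N be continuously differentiable with g(0) = 0 and g'(τ) = [ (1/γ) η(T−τ)ᵀ − H(τ)CᵀΣ ] C g(τ) − H(τ)( m + (1/γ−1)Cᵀμ ) + ((1−γ)/γ²) η(T−τ)ᵀΣ^{−1}μ. Define f(τ) := ((1−γ)/γ)( r + μᵀΣ^{−1}μ/(2γ) )τ + ∫_0^τ [ (1/2) g(u)ᵀCᵀΣC g(u) − (1/2) tr( CᵀΣC H(u) ) + ( m + (1/γ−1)Cᵀμ )ᵀ g(u) ] du, and define v(t,x,z) := (x^{1−γ}/(1−γ)) exp( γ( f(T−t) + zᵀg(T−t) − (1/2) zᵀH(T−t)z ) ) for (t,x,z) ∈ [0,T]×(0,∞)×ℝ^N. Then v(T,x,z) = x^{1−γ}/(1−γ), and at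 every (t,x,z) ∈ [0,T]×(0,∞)×ℝ^N the partial derivatives of v satisfy v_t + (m + Cᵀη(t)z)ᵀ v_z + (1/2) tr( CᵀΣC v_zz ) + r x v_x − (1/2)(μ + η(t)z)ᵀΣ^{−1}(μ + η(t)z) v_x²/v_xx − (1/(2 v_xx)) v_xzᵀ CᵀΣC v_xz − (v_x/v_xx) (μ + η(t)z)ᵀ C v_xz = 0, where v_z denotes the gradient of v in z, v_zz the Hessian in z, v_x and v_xx the first and second partial derivatives in x, and v_xz the gradient in z of v_x. -/

import Mathlib

open Matrix Set Topology

attribute [local instance] Matrix.normedAddCommGroup Matrix.normedSpace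

lemma dp_flip {m n : Type*} [Fintype m] [Fintype n] (M : Matrix m n ℝ) (u : m → ℝ) (v : n → ℝ) :
    u ⬝ᵥ (M *ᵥ v) = v ⬝ᵥ (Mᵀ *ᵥ u) := by
  rw [Matrix.dotProduct_mulVec, Matrix.mulVec_transpose, dotProduct_comm]

lemma update_eq_add {N : ℕ} (z : Fin N → ℝ) (i : Fin N) (s : ℝ) :
    Function.update z i s = z + (s - z i) • (Pi.single i 1 : Fin N → ℝ) := by
  funext j
  rcases eq_or_ne j i with rfl | hj
  · simp
  · simp [Function.update_apply, hj, Pi.single_apply, hj]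

lemma hasDerivAt_update_dot {N : ℕ} (z w : Fin N → ℝ) (i : Fin N) :
    HasDerivAt (fun s => Function.update z i s ⬝ᵥ w) (w i) (z i) := by
  have heq : (fun s => Function.update z i s ⬝ᵥ w) = fun s => z ⬝ᵥ w + (s - z i) * w i := by
    funext s
    rw [update_eq_add, add_dotProduct, smul_dotProduct, single_dotProduct]
    simp [smul_eq_mul, mul_assoc]
  rw [heq]
  simpa using (((hasDerivAt_id (z i)).sub_const (z i)).mul_const (w i)).const_add (z ⬝ᵥ w)

lemma hasDerivAt_update_quad {N : ℕ} (M : Matrix (Fin N) (Fin N) ℝ) (z : Fin N → ℝ) (i : Fin N) :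
    HasDerivAt (fun s => Function.update z i s ⬝ᵥ (M *ᵥ Function.update z i s))
      ((M *ᵥ z) i + (Mᵀ *ᵥ z) i) (z i) := by
  have heq : (fun s => Function.update z i s ⬝ᵥ (M *ᵥ Function.update z i s))
      = fun s => z ⬝ᵥ (M *ᵥ z) + (s - z i) * ((M *ᵥ z) i + (Mᵀ *ᵥ z) i)
          + (s - z i)^2 * M i i := by
    funext s
    rw [update_eq_add]
    rw [Matrix.mulVec_add, Matrix.mulVec_smul]
    rw [dotProduct_add, add_dotProduct, add_dotProduct, dotProduct_smul, dotProduct_smul,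
      smul_dotProduct, smul_dotProduct]
    have hms : M *ᵥ (Pi.single i 1 : Fin N → ℝ) = Mᵀ i := Matrix.mulVec_single_one M i
    simp only [Matrix.mulVec_add, Matrix.mulVec_smul, hms, dotProduct_add, add_dotProduct,
      dotProduct_smul, smul_dotProduct, smul_eq_mul, single_dotProduct]
    rw [show z ⬝ᵥ Mᵀ i = (Mᵀ *ᵥ z) i from dotProduct_comm z (Mᵀ i)]
    rw [show Mᵀ i i = M i i from rfl]
    ring
  rw [heq]
  have h1 := ((((hasDerivAt_id (z i)).sub_const (z i)).mul_const
      ((M *ᵥ z) i + (Mᵀ *ᵥ z) i)).const_add (z ⬝ᵥ (M *ᵥ z)))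
  have h2 := ((((hasDerivAt_id (z i)).sub_const (z i)).pow 2).mul_const (M i i))
  simpa using h1.fun_add h2

lemma hasDerivAt_update_exp {N : ℕ} (c a γ : ℝ) (gg : Fin N → ℝ) (h : Matrix (Fin N) (Fin N) ℝ)
    (hsymm : hᵀ = h) (z : Fin N → ℝ) (i : Fin N) :
    HasDerivAt (fun s => c * Real.exp (γ * (a + Function.update z i s ⬝ᵥ gg
        - 1/2 * (Function.update z i s ⬝ᵥ (h *ᵥ Function.update z i s)))))
      (c * Real.exp (γ * (a + z ⬝ᵥ gg - 1/2 * (z ⬝ᵥ (h *ᵥ z)))) * (γ * (gg i - (h *ᵥ z) i)))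
      (z i) := by
  have hin : HasDerivAt (fun s => γ * (a + Function.update z i s ⬝ᵥ gg
        - 1/2 * (Function.update z i s ⬝ᵥ (h *ᵥ Function.update z i s))))
      (γ * (gg i - 1/2 * ((h *ᵥ z) i + (hᵀ *ᵥ z) i))) (z i) := by
    exact ((((hasDerivAt_update_dot z gg i).const_add a).sub
      ((hasDerivAt_update_quad h z i).const_mul (1/2))).const_mul γ)
  have := (hin.exp).const_mul c
  rw [hsymm] at this
  simp only [Function.update_eq_self] at this
  exact this.congr_deriv (by ring)

lemma trace_mul_vecMulVec {n : Type*} [Fintype n] (A : Matrix n n ℝ) (u v : n → ℝ) :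
    Matrix.trace (A * vecMulVec u v) = v ⬝ᵥ (A *ᵥ u) := by
  simp only [Matrix.trace, Matrix.diag, Matrix.mul_apply, vecMulVec_apply, dotProduct,
    Matrix.mulVec, Finset.mul_sum]
  refine Finset.sum_congr rfl fun i _ => ?_
  refine Finset.sum_congr rfl fun j _ => ?_
  ring

set_option maxHeartbeats 2000000 in
/-- Verification core for the optimal trading problem in which both futures contracts and
the underlying assets are traded: the exponential-quadratic ansatz built from the
solutions `H`, `g` of the Riccati system and the integral `f` satisfies the terminal
condition and the reduced HJB equation. -/
theorem hjb_verification_futures_and_spot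
    (N : ℕ) (hN : 0 < N)
    -- the covariance matrix and its blocks
    (SF SFS SS : Matrix (Fin N) (Fin N) ℝ)
    (Sig : Matrix (Fin N ⊕ Fin N) (Fin N ⊕ Fin N) ℝ)
    (hSigdef : Sig = Matrix.fromBlocks SF SFS SFSᵀ SS)
    (hSig : Sig.PosDef)
    -- the time horizon, maturities, and basis parameters
    (T : ℝ) (Tv : Fin N → ℝ) (hT : 0 < T) (hTv : ∀ i, T < Tv i)
    (etaFv etaSv : Fin N → ℝ) (hetav : ∀ i, etaFv i < etaSv i)
    (γ r : ℝ) (hγ : 1 < γ)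
    (m : Fin N → ℝ) (μ : Fin N ⊕ Fin N → ℝ)
    (C : Matrix (Fin N ⊕ Fin N) (Fin N) ℝ) (hC : C = Matrix.fromRows 1 (-1))
    (etaF etaS : ℝ → Matrix (Fin N) (Fin N) ℝ)
    (hetaF : ∀ t, etaF t = Matrix.diagonal fun i => etaFv i / (Tv i - t))
    (hetaS : ∀ t, etaS t = Matrix.diagonal fun i => etaSv i / (Tv i - t))
    (eta : ℝ → Matrix (Fin N ⊕ Fin N) (Fin N) ℝ)
    (heta : ∀ t, eta t = Matrix.fromRows (etaF t) (etaS t))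
    -- the function `H`: C¹ symmetric solution of the Riccati equation with `H(0) = 0`
    (H H' : ℝ → Matrix (Fin N) (Fin N) ℝ)
    (hHderiv : ∀ τ ∈ Icc 0 T, HasDerivWithinAt H (H' τ) (Icc 0 T) τ)
    (hH'cont : ContinuousOn H' (Icc 0 T))
    (hHsymm : ∀ τ ∈ Icc 0 T, (H τ).IsSymm)
    (hH0 : H 0 = 0)
    (hHric : ∀ τ ∈ Icc 0 T,
      H' τ + H τ * (Cᵀ * Sig * C) * H τ
        - (1/γ) • ((eta (T - τ))ᵀ * C * H τ + H τ * (Cᵀ * eta (T - τ)))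
        - ((γ - 1)/γ^2) • ((eta (T - τ))ᵀ * Sig⁻¹ * eta (T - τ)) = 0)
    -- the function `g`: C¹ solution of the linear ODE with `g(0) = 0`
    (g g' : ℝ → (Fin N → ℝ))
    (hgderiv : ∀ τ ∈ Icc 0 T, HasDerivWithinAt g (g' τ) (Icc 0 T) τ)
    (hg'cont : ContinuousOn g' (Icc 0 T))
    (hg0 : g 0 = 0)
    (hgode : ∀ τ ∈ Icc 0 T,
      g' τ = (((1/γ) • (eta (T - τ))ᵀ - H τ * (Cᵀ * Sig)) * C) *ᵥ g τ
          - H τ *ᵥ (m + (1/γ - 1) • (Cᵀ *ᵥ μ))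
          + ((1 - γ)/γ^2) • (((eta (T - τ))ᵀ * Sig⁻¹) *ᵥ μ))
    -- the function `f`
    (f : ℝ → ℝ)
    (hf : ∀ τ, f τ =
      (1 - γ)/γ * (r + (μ ⬝ᵥ (Sig⁻¹ *ᵥ μ))/(2*γ)) * τ
      + ∫ u in (0:ℝ)..τ,
          ((1/2) * (g u ⬝ᵥ ((Cᵀ * Sig * C) *ᵥ g u))
            - (1/2) * Matrix.trace (Cᵀ * Sig * C * H u)
            + (m + (1/γ - 1) • (Cᵀ *ᵥ μ)) ⬝ᵥ g u))
    -- the candidate value function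
    (v : ℝ → ℝ → (Fin N → ℝ) → ℝ)
    (hv : ∀ t x z, v t x z =
      x ^ (1 - γ) / (1 - γ) *
        Real.exp (γ * (f (T - t) + z ⬝ᵥ g (T - t) - (1/2) * (z ⬝ᵥ (H (T - t) *ᵥ z)))))
    -- its partial derivatives
    (vt vx vxx : ℝ → ℝ → (Fin N → ℝ) → ℝ)
    (vz vxz : ℝ → ℝ → (Fin N → ℝ) → (Fin N → ℝ))
    (vzz : ℝ → ℝ → (Fin N → ℝ) → Matrix (Fin N) (Fin N) ℝ)
    (hvt : ∀ t ∈ Icc 0 T, ∀ x ∈ Ioi (0:ℝ), ∀ z,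
      HasDerivWithinAt (fun s => v s x z) (vt t x z) (Icc 0 T) t)
    (hvx : ∀ t ∈ Icc 0 T, ∀ x ∈ Ioi (0:ℝ), ∀ z,
      HasDerivAt (fun y => v t y z) (vx t x z) x)
    (hvxx : ∀ t ∈ Icc 0 T, ∀ x ∈ Ioi (0:ℝ), ∀ z,
      HasDerivAt (fun y => vx t y z) (vxx t x z) x)
    (hvz : ∀ t ∈ Icc 0 T, ∀ x ∈ Ioi (0:ℝ), ∀ z, ∀ i,
      HasDerivAt (fun s => v t x (Function.update z i s)) (vz t x z i) (z i))
    (hvzz : ∀ t ∈ Icc 0 T, ∀ x ∈ Ioi (0:ℝ), ∀ z, ∀ i j,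
      HasDerivAt (fun s => vz t x (Function.update z j s) i) (vzz t x z i j) (z j))
    (hvxz : ∀ t ∈ Icc 0 T, ∀ x ∈ Ioi (0:ℝ), ∀ z, ∀ i,
      HasDerivAt (fun s => vx t x (Function.update z i s)) (vxz t x z i) (z i)) :
    -- terminal condition
    (∀ x : ℝ, 0 < x → ∀ z, v T x z = x ^ (1 - γ) / (1 - γ)) ∧
    -- the reduced HJB equation
    (∀ t ∈ Icc 0 T, ∀ x ∈ Ioi (0:ℝ), ∀ z,
      vt t x z
        + (m + ((Cᵀ * eta t) *ᵥ z)) ⬝ᵥ vz t x z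
        + (1/2) * Matrix.trace (Cᵀ * Sig * C * vzz t x z)
        + r * x * vx t x z
        - (1/2) * ((μ + (eta t *ᵥ z)) ⬝ᵥ (Sig⁻¹ *ᵥ (μ + (eta t *ᵥ z))))
            * (vx t x z)^2 / vxx t x z
        - (1/(2 * vxx t x z)) * (vxz t x z ⬝ᵥ ((Cᵀ * Sig * C) *ᵥ vxz t x z))
        - (vx t x z / vxx t x z) * ((μ + (eta t *ᵥ z)) ⬝ᵥ (C *ᵥ vxz t x z))
        = 0) := by

  have hγ0 : γ ≠ 0 := by linarith
  have h1γ : (1:ℝ) - γ ≠ 0 := by linarith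
  have hSigSymm : Sigᵀ = Sig := by
    have := hSig.isHermitian
    rwa [Matrix.IsHermitian, Matrix.conjTranspose_eq_transpose_of_trivial] at this
  have hSigInvSymm : (Sig⁻¹)ᵀ = Sig⁻¹ := by
    rw [Matrix.transpose_nonsing_inv, hSigSymm]
  have hAsymm : (Cᵀ * Sig * C)ᵀ = Cᵀ * Sig * C := by
    rw [Matrix.transpose_mul, Matrix.transpose_mul, Matrix.transpose_transpose, hSigSymm,
      Matrix.mul_assoc]
  constructor
  · intro x hx z
    rw [hv, sub_self, hf 0, hg0, hH0]
    simp
  · intro t ht x hx z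
    obtain ⟨ht0, htT⟩ := ht
    have hx0 : (0:ℝ) < x := hx
    have hτmem : T - t ∈ Icc 0 T := ⟨by linarith, by linarith⟩
    have hTt : T - (T - t) = t := by ring
    have hsymm : (H (T - t))ᵀ = H (T - t) := hHsymm _ hτmem
    have hE0 : (0:ℝ) < Real.exp (γ * (f (T - t) + z ⬝ᵥ g (T - t) - 1/2 * (z ⬝ᵥ (H (T - t) *ᵥ z)))) := Real.exp_pos _
    have hX0 : (0:ℝ) < x ^ (-γ) := Real.rpow_pos_of_pos hx0 _
    -- formula for vx
    have hvx_eq : ∀ y ∈ Ioi (0:ℝ), ∀ z' : Fin N → ℝ, vx t y z' = y ^ (-γ) * Real.exp (γ * (f (T - t) + z' ⬝ᵥ g (T - t) - 1/2 * (z' ⬝ᵥ (H (T - t) *ᵥ z')))) := by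
      intro y hy z'
      have hfun : (fun u => v t u z') = fun u => u ^ ((1:ℝ) - γ) / (1 - γ) * Real.exp (γ * (f (T - t) + z' ⬝ᵥ g (T - t) - 1/2 * (z' ⬝ᵥ (H (T - t) *ᵥ z')))) :=
        funext fun u => hv t u z'
      have h2 := hvx t ⟨ht0, htT⟩ y hy z'
      rw [hfun] at h2
      have h3 := h2.unique
        (((Real.hasDerivAt_rpow_const (p := (1:ℝ) - γ) (Or.inl (ne_of_gt hy))).div_const
          ((1:ℝ) - γ)).mul_const _)
      rw [h3, show (1:ℝ) - γ - 1 = -γ by ring]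
      field_simp
    -- formula for vxx
    have hvxx_eq : vxx t x z = -γ * x ^ (-γ - 1) * Real.exp (γ * (f (T - t) + z ⬝ᵥ g (T - t) - 1/2 * (z ⬝ᵥ (H (T - t) *ᵥ z)))) := by
      have hev : (fun y => vx t y z) =ᶠ[𝓝 x] fun y => y ^ (-γ) * Real.exp (γ * (f (T - t) + z ⬝ᵥ g (T - t) - 1/2 * (z ⬝ᵥ (H (T - t) *ᵥ z)))) := by
        filter_upwards [isOpen_Ioi.eventually_mem hx] with y hy using hvx_eq y hy z
      have h1 : HasDerivAt (fun y : ℝ => y ^ (-γ) * Real.exp (γ * (f (T - t) + z ⬝ᵥ g (T - t) - 1/2 * (z ⬝ᵥ (H (T - t) *ᵥ z))))) (-γ * x ^ (-γ - 1) * Real.exp (γ * (f (T - t) + z ⬝ᵥ g (T - t) - 1/2 * (z ⬝ᵥ (H (T - t) *ᵥ z))))) x := by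
        simpa [mul_assoc] using (Real.hasDerivAt_rpow_const (p := -γ)
          (Or.inl (ne_of_gt hx0))).mul_const (Real.exp (γ * (f (T - t) + z ⬝ᵥ g (T - t) - 1/2 * (z ⬝ᵥ (H (T - t) *ᵥ z)))))
      exact (hvxx t ⟨ht0, htT⟩ x hx z).unique (h1.congr_of_eventuallyEq hev)
    -- formula for vz
    have hvz_eq : ∀ (z' : Fin N → ℝ) (i : Fin N), vz t x z' i
        = x ^ ((1:ℝ) - γ) / (1 - γ) * Real.exp (γ * (f (T - t) + z' ⬝ᵥ g (T - t) - 1/2 * (z' ⬝ᵥ (H (T - t) *ᵥ z')))) * (γ * (g (T - t) i - (H (T - t) *ᵥ z') i)) := by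
      intro z' i
      have h2 := hvz t ⟨ht0, htT⟩ x hx z' i
      have hfun : (fun s => v t x (Function.update z' i s)) = fun s =>
          x ^ ((1:ℝ) - γ) / (1 - γ) * Real.exp (γ * (f (T - t) + Function.update z' i s ⬝ᵥ g (T - t) - 1/2 * (Function.update z' i s ⬝ᵥ (H (T - t) *ᵥ Function.update z' i s)))) :=
        funext fun s => hv t x _
      rw [hfun] at h2
      exact h2.unique (hasDerivAt_update_exp _ _ _ _ _ hsymm z' i)
    -- formula for vxz
    have hvxz_eq : ∀ i : Fin N, vxz t x z i
        = x ^ (-γ) * Real.exp (γ * (f (T - t) + z ⬝ᵥ g (T - t) - 1/2 * (z ⬝ᵥ (H (T - t) *ᵥ z)))) * (γ * (g (T - t) i - (H (T - t) *ᵥ z) i)) := by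
      intro i
      have h2 := hvxz t ⟨ht0, htT⟩ x hx z i
      have hfun : (fun s => vx t x (Function.update z i s)) = fun s =>
          x ^ (-γ) * Real.exp (γ * (f (T - t) + Function.update z i s ⬝ᵥ g (T - t) - 1/2 * (Function.update z i s ⬝ᵥ (H (T - t) *ᵥ Function.update z i s)))) :=
        funext fun s => hvx_eq x hx _
      rw [hfun] at h2
      exact h2.unique (hasDerivAt_update_exp _ _ _ _ _ hsymm z i)
    -- formula for vzz
    have hvzz_eq : ∀ i j : Fin N, vzz t x z i j
        = x ^ ((1:ℝ) - γ) / (1 - γ) * Real.exp (γ * (f (T - t) + z ⬝ᵥ g (T - t) - 1/2 * (z ⬝ᵥ (H (T - t) *ᵥ z)))) * (γ * (g (T - t) j - (H (T - t) *ᵥ z) j)) * (γ * (g (T - t) i - (H (T - t) *ᵥ z) i))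
          + x ^ ((1:ℝ) - γ) / (1 - γ) * Real.exp (γ * (f (T - t) + z ⬝ᵥ g (T - t) - 1/2 * (z ⬝ᵥ (H (T - t) *ᵥ z)))) * (γ * (-(H (T - t) i j))) := by
      intro i j
      have h2 := hvzz t ⟨ht0, htT⟩ x hx z i j
      have hB := ((hasDerivAt_update_dot z (H (T - t) i) j).const_sub (g (T - t) i)).const_mul γ
      have h3 := (hasDerivAt_update_exp (x ^ ((1:ℝ) - γ) / (1 - γ)) (f (T - t)) γ (g (T - t))
        (H (T - t)) hsymm z j).mul hB
      simp only [Function.update_eq_self] at h3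
      have hfun : (fun s => vz t x (Function.update z j s) i) = fun s =>
          x ^ ((1:ℝ) - γ) / (1 - γ) * Real.exp (γ * (f (T - t) + Function.update z j s ⬝ᵥ g (T - t) - 1/2 * (Function.update z j s ⬝ᵥ (H (T - t) *ᵥ Function.update z j s))))
            * (γ * (g (T - t) i - Function.update z j s ⬝ᵥ H (T - t) i)) := by
        funext s
        rw [hvz_eq]
        rw [show (H (T - t) *ᵥ Function.update z j s) i = Function.update z j s ⬝ᵥ H (T - t) i
          from dotProduct_comm _ _]
      rw [hfun] at h2
      have h4 := h2.unique h3
      rw [h4, show z ⬝ᵥ H (T - t) i = (H (T - t) *ᵥ z) i from dotProduct_comm _ _]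

    -- entrywise derivatives
    have hHij : ∀ (i j : Fin N), ∀ τ ∈ Icc (0:ℝ) T,
        HasDerivWithinAt (fun u => H u i j) (H' τ i j) (Icc 0 T) τ :=
      fun i j τ hτ => hasDerivWithinAt_pi.1 (hasDerivWithinAt_pi.1 (hHderiv τ hτ) i) j
    have hgi : ∀ (i : Fin N), ∀ τ ∈ Icc (0:ℝ) T,
        HasDerivWithinAt (fun u => g u i) (g' τ i) (Icc 0 T) τ :=
      fun i τ hτ => hasDerivWithinAt_pi.1 (hgderiv τ hτ) i
    -- the truncation map
    have hpmem : ∀ u : ℝ, min T (max 0 u) ∈ Icc (0:ℝ) T :=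
      fun u => ⟨le_min (le_of_lt hT) (le_max_left 0 u), min_le_left _ _⟩
    have hpcont : Continuous (fun u : ℝ => min T (max 0 u)) :=
      continuous_const.min (continuous_const.max continuous_id)
    have hpid : ∀ u ∈ Icc (0:ℝ) T, min T (max 0 u) = u := by
      intro u hu
      rw [max_eq_right hu.1, min_eq_right hu.2]
    have hgic : ∀ i : Fin N, Continuous (fun u : ℝ => g (min T (max 0 u)) i) := by
      intro i
      have hco : ContinuousOn (fun u => g u i) (Icc (0:ℝ) T) :=
        fun τ hτ => (hgi i τ hτ).continuousWithinAt
      exact hco.comp_continuous hpcont hpmem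
    have hHic : ∀ i j : Fin N, Continuous (fun u : ℝ => H (min T (max 0 u)) i j) := by
      intro i j
      have hco : ContinuousOn (fun u => H u i j) (Icc (0:ℝ) T) :=
        fun τ hτ => (hHij i j τ hτ).continuousWithinAt
      exact hco.comp_continuous hpcont hpmem
    -- the extended integrand
    set ψ : ℝ → ℝ := fun u =>
      (1/2) * (g (min T (max 0 u)) ⬝ᵥ ((Cᵀ * Sig * C) *ᵥ g (min T (max 0 u))))
        - (1/2) * Matrix.trace (Cᵀ * Sig * C * H (min T (max 0 u)))
        + (m + (1/γ - 1) • (Cᵀ *ᵥ μ)) ⬝ᵥ g (min T (max 0 u)) with hψdef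
    have hψcont : Continuous ψ := by
      rw [hψdef]
      simp only [dotProduct, Matrix.mulVec, Matrix.trace, Matrix.diag, Matrix.mul_apply]
      refine Continuous.add (Continuous.sub (continuous_const.mul ?_) (continuous_const.mul ?_)) ?_
      · exact continuous_finset_sum _ fun i _ => (hgic i).mul
          (continuous_finset_sum _ fun j _ => continuous_const.mul (hgic j))
      · exact continuous_finset_sum _ fun i _ =>
          continuous_finset_sum _ fun j _ => continuous_const.mul (hHic j i)
      · exact continuous_finset_sum _ fun i _ => continuous_const.mul (hgic i)
    have hFder : ∀ τ : ℝ, HasDerivAt (fun s : ℝ => (1 - γ)/γ * (r + (μ ⬝ᵥ (Sig⁻¹ *ᵥ μ))/(2*γ)) * s + ∫ u in (0:ℝ)..s, ψ u)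
        ((1 - γ)/γ * (r + (μ ⬝ᵥ (Sig⁻¹ *ᵥ μ))/(2*γ)) + ψ τ) τ := by
      intro τ
      have h1 : HasDerivAt (fun s : ℝ => (1 - γ)/γ * (r + (μ ⬝ᵥ (Sig⁻¹ *ᵥ μ))/(2*γ)) * s) ((1 - γ)/γ * (r + (μ ⬝ᵥ (Sig⁻¹ *ᵥ μ))/(2*γ))) τ := by
        simpa using (hasDerivAt_id τ).const_mul ((1 - γ)/γ * (r + (μ ⬝ᵥ (Sig⁻¹ *ᵥ μ))/(2*γ)))
      have h2 : HasDerivAt (fun s : ℝ => ∫ u in (0:ℝ)..s, ψ u) (ψ τ) τ :=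
        intervalIntegral.integral_hasDerivAt_right (hψcont.intervalIntegrable _ _)
          (hψcont.stronglyMeasurableAtFilter _ _) hψcont.continuousAt
      exact h1.add h2
    have hfeq : ∀ τ ∈ Icc (0:ℝ) T, f τ = (1 - γ)/γ * (r + (μ ⬝ᵥ (Sig⁻¹ *ᵥ μ))/(2*γ)) * τ + ∫ u in (0:ℝ)..τ, ψ u := by
      intro τ hτ
      rw [hf τ]
      congr 1
      refine intervalIntegral.integral_congr fun u hu => ?_
      rw [uIcc_of_le hτ.1] at hu
      have hu' : min T (max 0 u) = u := hpid u ⟨hu.1, le_trans hu.2 hτ.2⟩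
      rw [hψdef]
      simp only [hu']
    have hfd : HasDerivWithinAt f ((1 - γ)/γ * (r + (μ ⬝ᵥ (Sig⁻¹ *ᵥ μ))/(2*γ)) + ψ (T - t)) (Icc 0 T) (T - t) :=
      ((hFder (T - t)).hasDerivWithinAt).congr (fun y hy => hfeq y hy) (hfeq _ hτmem)
    have hdot : HasDerivWithinAt (fun u => z ⬝ᵥ g u) (z ⬝ᵥ g' (T - t)) (Icc 0 T) (T - t) := by
      have h0 := HasDerivWithinAt.fun_sum (u := (Finset.univ : Finset (Fin N)))
        (fun i _ => ((hgi i _ hτmem).const_mul (z i)))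
      simpa [dotProduct] using h0
    have hquad : HasDerivWithinAt (fun u => z ⬝ᵥ (H u *ᵥ z)) (z ⬝ᵥ (H' (T - t) *ᵥ z))
        (Icc 0 T) (T - t) := by
      have h0 := HasDerivWithinAt.fun_sum (u := (Finset.univ : Finset (Fin N)))
        (fun i _ => (HasDerivWithinAt.fun_sum (u := (Finset.univ : Finset (Fin N)))
          (fun j _ => ((hHij i j _ hτmem).mul_const (z j)))).const_mul (z i))
      simpa [dotProduct, Matrix.mulVec, Finset.mul_sum] using h0
    have hφ : HasDerivWithinAt (fun u => γ * (f u + z ⬝ᵥ g u - 1/2 * (z ⬝ᵥ (H u *ᵥ z))))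
        (γ * (((1 - γ)/γ * (r + (μ ⬝ᵥ (Sig⁻¹ *ᵥ μ))/(2*γ)) + ψ (T - t)) + z ⬝ᵥ g' (T - t) - 1/2 * (z ⬝ᵥ (H' (T - t) *ᵥ z)))) (Icc 0 T) (T - t) :=
      ((hfd.add hdot).sub (hquad.const_mul (1/2))).const_mul γ
    have hρ : HasDerivWithinAt (fun s : ℝ => T - s) (-1) (Icc 0 T) t := by
      simpa using (hasDerivWithinAt_id t (Icc (0:ℝ) T)).const_sub T
    have hmaps : MapsTo (fun s : ℝ => T - s) (Icc 0 T) (Icc 0 T) := by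
      intro s hs
      simp only [mem_Icc] at hs ⊢
      constructor <;> linarith
    have hcomp := (hφ.comp t hρ hmaps).exp.const_mul (x ^ ((1:ℝ) - γ) / (1 - γ))
    have hvt3 : HasDerivWithinAt (fun s => v s x z)
        (x ^ ((1:ℝ) - γ) / (1 - γ) * (Real.exp (γ * (f (T - t) + z ⬝ᵥ g (T - t) - 1/2 * (z ⬝ᵥ (H (T - t) *ᵥ z)))) * (γ * (((1 - γ)/γ * (r + (μ ⬝ᵥ (Sig⁻¹ *ᵥ μ))/(2*γ)) + ψ (T - t)) + z ⬝ᵥ g' (T - t) - 1/2 * (z ⬝ᵥ (H' (T - t) *ᵥ z))) * -1))) (Icc 0 T) t := by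
      have hfun : (fun s => v s x z) = fun s => x ^ ((1:ℝ) - γ) / (1 - γ) *
          Real.exp (((fun u => γ * (f u + z ⬝ᵥ g u - 1/2 * (z ⬝ᵥ (H u *ᵥ z)))) ∘
            (fun s : ℝ => T - s)) s) :=
        funext fun s => hv s x z
      rw [hfun]
      exact hcomp
    have hvt_eq : vt t x z = x ^ ((1:ℝ) - γ) / (1 - γ) * (Real.exp (γ * (f (T - t) + z ⬝ᵥ g (T - t) - 1/2 * (z ⬝ᵥ (H (T - t) *ᵥ z)))) * (γ * (((1 - γ)/γ * (r + (μ ⬝ᵥ (Sig⁻¹ *ᵥ μ))/(2*γ)) + ψ (T - t)) + z ⬝ᵥ g' (T - t) - 1/2 * (z ⬝ᵥ (H' (T - t) *ᵥ z))) * -1)) :=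
      (uniqueDiffOn_Icc hT t ⟨ht0, htT⟩).eq_deriv _ (hvt t ⟨ht0, htT⟩ x hx z) hvt3
    -- vector and matrix forms of the derivatives
    have hvzv : vz t x z = (γ * (x ^ ((1:ℝ) - γ) / (1 - γ) * Real.exp (γ * (f (T - t) + z ⬝ᵥ g (T - t) - 1/2 * (z ⬝ᵥ (H (T - t) *ᵥ z)))))) • (g (T - t) - H (T - t) *ᵥ z) := by
      funext i
      rw [hvz_eq z i]
      simp only [Pi.smul_apply, Pi.sub_apply, smul_eq_mul]
      ring
    have hvxzv : vxz t x z = (γ * (x ^ (-γ) * Real.exp (γ * (f (T - t) + z ⬝ᵥ g (T - t) - 1/2 * (z ⬝ᵥ (H (T - t) *ᵥ z)))))) • (g (T - t) - H (T - t) *ᵥ z) := by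
      funext i
      rw [hvxz_eq i]
      simp only [Pi.smul_apply, Pi.sub_apply, smul_eq_mul]
      ring
    have hvzzm : vzz t x z = (γ * γ * (x ^ ((1:ℝ) - γ) / (1 - γ) * Real.exp (γ * (f (T - t) + z ⬝ᵥ g (T - t) - 1/2 * (z ⬝ᵥ (H (T - t) *ᵥ z)))))) • vecMulVec (g (T - t) - H (T - t) *ᵥ z) (g (T - t) - H (T - t) *ᵥ z) - (γ * (x ^ ((1:ℝ) - γ) / (1 - γ) * Real.exp (γ * (f (T - t) + z ⬝ᵥ g (T - t) - 1/2 * (z ⬝ᵥ (H (T - t) *ᵥ z)))))) • H (T - t) := by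
      ext i j
      rw [hvzz_eq i j]
      simp only [Matrix.sub_apply, Matrix.smul_apply, vecMulVec_apply, Pi.sub_apply, smul_eq_mul]
      ring
    have htr : Matrix.trace (Cᵀ * Sig * C * vzz t x z)
        = γ * γ * (x ^ ((1:ℝ) - γ) / (1 - γ) * Real.exp (γ * (f (T - t) + z ⬝ᵥ g (T - t) - 1/2 * (z ⬝ᵥ (H (T - t) *ᵥ z))))) * ((g (T - t) - H (T - t) *ᵥ z) ⬝ᵥ ((Cᵀ * Sig * C) *ᵥ (g (T - t) - H (T - t) *ᵥ z))) - γ * (x ^ ((1:ℝ) - γ) / (1 - γ) * Real.exp (γ * (f (T - t) + z ⬝ᵥ g (T - t) - 1/2 * (z ⬝ᵥ (H (T - t) *ᵥ z))))) * Matrix.trace (Cᵀ * Sig * C * H (T - t)) := by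
      rw [hvzzm, Matrix.mul_sub, Matrix.mul_smul, Matrix.mul_smul, Matrix.trace_sub,
        Matrix.trace_smul, Matrix.trace_smul, trace_mul_vecMulVec]
      simp only [smul_eq_mul]
    -- scalar reductions of the bilinear terms
    have hQAQ : (g (T - t) - H (T - t) *ᵥ z) ⬝ᵥ ((Cᵀ * Sig * C) *ᵥ (g (T - t) - H (T - t) *ᵥ z)) = g (T - t) ⬝ᵥ ((Cᵀ * Sig * C) *ᵥ g (T - t)) - 2 * ((H (T - t) *ᵥ z) ⬝ᵥ ((Cᵀ * Sig * C) *ᵥ g (T - t))) + (H (T - t) *ᵥ z) ⬝ᵥ ((Cᵀ * Sig * C) *ᵥ (H (T - t) *ᵥ z)) := by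
      rw [Matrix.mulVec_sub, dotProduct_sub, sub_dotProduct, sub_dotProduct,
        dp_flip (Cᵀ * Sig * C) (g (T - t)) (H (T - t) *ᵥ z), hAsymm]
      ring
    have hMQ : (m + (Cᵀ * eta t) *ᵥ z) ⬝ᵥ (g (T - t) - H (T - t) *ᵥ z) = m ⬝ᵥ g (T - t) - m ⬝ᵥ (H (T - t) *ᵥ z) + (((eta t *ᵥ z) ⬝ᵥ (C *ᵥ g (T - t))) - ((eta t *ᵥ z) ⬝ᵥ (C *ᵥ (H (T - t) *ᵥ z)))) := by
      rw [← Matrix.mulVec_mulVec, add_dotProduct, dotProduct_sub, dotProduct_sub,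
        dotProduct_comm (Cᵀ *ᵥ (eta t *ᵥ z)) (g (T - t)), dp_flip Cᵀ (g (T - t)) (eta t *ᵥ z),
        Matrix.transpose_transpose, dotProduct_comm (Cᵀ *ᵥ (eta t *ᵥ z)) (H (T - t) *ᵥ z),
        dp_flip Cᵀ (H (T - t) *ᵥ z) (eta t *ᵥ z), Matrix.transpose_transpose]
    have hS : (μ + eta t *ᵥ z) ⬝ᵥ (Sig⁻¹ *ᵥ (μ + eta t *ᵥ z)) = μ ⬝ᵥ (Sig⁻¹ *ᵥ μ) + 2 * (μ ⬝ᵥ (Sig⁻¹ *ᵥ (eta t *ᵥ z))) + (eta t *ᵥ z) ⬝ᵥ (Sig⁻¹ *ᵥ (eta t *ᵥ z)) := by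
      rw [Matrix.mulVec_add, add_dotProduct, dotProduct_add, dotProduct_add,
        dp_flip Sig⁻¹ (eta t *ᵥ z) μ, hSigInvSymm]
      ring
    have hM6 : (μ + eta t *ᵥ z) ⬝ᵥ (C *ᵥ (g (T - t) - H (T - t) *ᵥ z)) = μ ⬝ᵥ (C *ᵥ g (T - t)) - μ ⬝ᵥ (C *ᵥ (H (T - t) *ᵥ z)) + (((eta t *ᵥ z) ⬝ᵥ (C *ᵥ g (T - t))) - ((eta t *ᵥ z) ⬝ᵥ (C *ᵥ (H (T - t) *ᵥ z)))) := by
      rw [Matrix.mulVec_sub, add_dotProduct, dotProduct_sub, dotProduct_sub]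
    have hψval : ψ (T - t) = 1/2 * (g (T - t) ⬝ᵥ ((Cᵀ * Sig * C) *ᵥ g (T - t))) - 1/2 * (Matrix.trace (Cᵀ * Sig * C * H (T - t))) + (m ⬝ᵥ g (T - t) + (1/γ - 1) * (μ ⬝ᵥ (C *ᵥ g (T - t)))) := by
      simp only [hψdef, hpid (T - t) hτmem]
      rw [add_dotProduct, smul_dotProduct, dotProduct_comm (Cᵀ *ᵥ μ) (g (T - t)),
        dp_flip Cᵀ (g (T - t)) μ, Matrix.transpose_transpose]
      simp only [smul_eq_mul]
    have hE8 : z ⬝ᵥ (((eta t)ᵀ * C) *ᵥ g (T - t)) = (eta t *ᵥ z) ⬝ᵥ (C *ᵥ g (T - t)) := by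
      rw [← Matrix.mulVec_mulVec, dp_flip ((eta t)ᵀ) z (C *ᵥ g (T - t)),
        Matrix.transpose_transpose, dotProduct_comm]
    have hE2 : z ⬝ᵥ ((H (T - t) * (Cᵀ * Sig) * C) *ᵥ g (T - t)) = (H (T - t) *ᵥ z) ⬝ᵥ ((Cᵀ * Sig * C) *ᵥ g (T - t)) := by
      rw [Matrix.mul_assoc, ← Matrix.mulVec_mulVec, dp_flip (H (T - t)) z _, hsymm,
        dotProduct_comm]
    have hE5 : z ⬝ᵥ (H (T - t) *ᵥ (m + (1/γ - 1) • (Cᵀ *ᵥ μ))) = m ⬝ᵥ (H (T - t) *ᵥ z) + (1/γ - 1) * (μ ⬝ᵥ (C *ᵥ (H (T - t) *ᵥ z))) := by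
      rw [dp_flip (H (T - t)) z _, hsymm, add_dotProduct, smul_dotProduct,
        dotProduct_comm (Cᵀ *ᵥ μ) (H (T - t) *ᵥ z), dp_flip Cᵀ (H (T - t) *ᵥ z) μ, Matrix.transpose_transpose]
      simp only [smul_eq_mul]
    have hE11 : z ⬝ᵥ (((eta t)ᵀ * Sig⁻¹) *ᵥ μ) = μ ⬝ᵥ (Sig⁻¹ *ᵥ (eta t *ᵥ z)) := by
      rw [← Matrix.mulVec_mulVec, dp_flip ((eta t)ᵀ) z _, Matrix.transpose_transpose,
        dotProduct_comm, dp_flip Sig⁻¹ (eta t *ᵥ z) μ, hSigInvSymm]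
    have hODEz : z ⬝ᵥ g' (T - t)
        = 1/γ * ((eta t *ᵥ z) ⬝ᵥ (C *ᵥ g (T - t))) - ((H (T - t) *ᵥ z) ⬝ᵥ ((Cᵀ * Sig * C) *ᵥ g (T - t))) - ((m ⬝ᵥ (H (T - t) *ᵥ z)) + (1/γ - 1) * (μ ⬝ᵥ (C *ᵥ (H (T - t) *ᵥ z)))) + (1 - γ)/γ^2 * (μ ⬝ᵥ (Sig⁻¹ *ᵥ (eta t *ᵥ z))) := by
      have h0 := hgode (T - t) hτmem
      rw [hTt] at h0
      rw [h0, dotProduct_add, dotProduct_sub, dotProduct_smul, Matrix.sub_mul, Matrix.smul_mul,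
        Matrix.sub_mulVec, Matrix.smul_mulVec, dotProduct_sub, dotProduct_smul,
        hE8, hE2, hE5, hE11]
      simp only [smul_eq_mul]
    have hE3 : z ⬝ᵥ ((H (T - t) * (Cᵀ * Sig * C) * H (T - t)) *ᵥ z) = (H (T - t) *ᵥ z) ⬝ᵥ ((Cᵀ * Sig * C) *ᵥ (H (T - t) *ᵥ z)) := by
      rw [← Matrix.mulVec_mulVec, ← Matrix.mulVec_mulVec, dp_flip (H (T - t)) z _, hsymm,
        dotProduct_comm]
    have hE9a : z ⬝ᵥ (((eta t)ᵀ * C * H (T - t)) *ᵥ z) = (eta t *ᵥ z) ⬝ᵥ (C *ᵥ (H (T - t) *ᵥ z)) := by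
      rw [← Matrix.mulVec_mulVec, ← Matrix.mulVec_mulVec, dp_flip ((eta t)ᵀ) z _,
        Matrix.transpose_transpose, dotProduct_comm]
    have hE9b : z ⬝ᵥ ((H (T - t) * (Cᵀ * eta t)) *ᵥ z) = (eta t *ᵥ z) ⬝ᵥ (C *ᵥ (H (T - t) *ᵥ z)) := by
      rw [← Matrix.mulVec_mulVec, ← Matrix.mulVec_mulVec, dp_flip (H (T - t)) z _, hsymm,
        dotProduct_comm, dp_flip Cᵀ (H (T - t) *ᵥ z) (eta t *ᵥ z), Matrix.transpose_transpose]
    have hE12 : z ⬝ᵥ (((eta t)ᵀ * Sig⁻¹ * eta t) *ᵥ z) = (eta t *ᵥ z) ⬝ᵥ (Sig⁻¹ *ᵥ (eta t *ᵥ z)) := by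
      rw [← Matrix.mulVec_mulVec, ← Matrix.mulVec_mulVec, dp_flip ((eta t)ᵀ) z _,
        Matrix.transpose_transpose, dotProduct_comm]
    have hZH : z ⬝ᵥ (H' (T - t) *ᵥ z)
        = -((H (T - t) *ᵥ z) ⬝ᵥ ((Cᵀ * Sig * C) *ᵥ (H (T - t) *ᵥ z))) + 1/γ * (((eta t *ᵥ z) ⬝ᵥ (C *ᵥ (H (T - t) *ᵥ z))) + ((eta t *ᵥ z) ⬝ᵥ (C *ᵥ (H (T - t) *ᵥ z)))) + (γ - 1)/γ^2 * ((eta t *ᵥ z) ⬝ᵥ (Sig⁻¹ *ᵥ (eta t *ᵥ z))) := by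
      have h0 := hHric (T - t) hτmem
      rw [hTt] at h0
      have h1 := congrArg (fun M => z ⬝ᵥ (M *ᵥ z)) h0
      simp only [Matrix.add_mulVec, Matrix.sub_mulVec, Matrix.smul_mulVec, dotProduct_add,
        dotProduct_sub, dotProduct_smul, smul_eq_mul, Matrix.zero_mulVec, dotProduct_zero] at h1
      rw [hE3, hE9a, hE9b, hE12] at h1
      linear_combination h1
    -- powers of x
    have hpow1 : x ^ ((1:ℝ) - γ) = x * x ^ (-γ) := by
      rw [show (1:ℝ) - γ = -γ + 1 by ring, Real.rpow_add hx0, Real.rpow_one]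
      ring
    have hpow2 : x ^ (-γ - 1) = x ^ (-γ) / x := by
      rw [Real.rpow_sub hx0, Real.rpow_one]
    have hEne : Real.exp (γ * (f (T - t) + z ⬝ᵥ g (T - t) - 1/2 * (z ⬝ᵥ (H (T - t) *ᵥ z)))) ≠ 0 := ne_of_gt hE0
    have hXne : x ^ (-γ) ≠ 0 := ne_of_gt hX0
    have hxne : x ≠ 0 := ne_of_gt hx0
    -- assemble
    rw [hvt_eq, hvzv, htr, hvx_eq x hx z, hvxx_eq, hvxzv]
    simp only [Matrix.mulVec_smul, dotProduct_smul, smul_dotProduct, smul_eq_mul]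
    rw [hQAQ, hMQ, hS, hM6, hODEz, hZH, hψval, hpow1, hpow2]
    field_simp
    ring
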